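/- Let r and h be integers with 1 ≤ r ≤ h, and let K(r,h) denote the number of tuples α ∈ {1,…,h}^{2r} in which every value occurs an even number of times. Then μ_{2r}·h·(h−1)···(h−r+1) ≤ K(r,h) ≤ μ_{2r}·h^r, where μ_{2r} = (2r)!/(2^r·r!). In particular, there exists θ = θ(h,r) ∈ [0,1] such that K(r,h) = μ_{2r}·(h − θ·r)^r. -/

import Mathlib

open scoped Classical

noncomputable section

/-- `μ_{2r} = (2r)!/(2^r r!)`, the `2r`-th moment of a standard Gaussian. -/
def mu (r : ℕ) : ℝ := (Nat.factorial (2 * r) : ℝ) / (2 ^ r * Nat.factorial r)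

/-- `K r h`: the number of tuples `α ∈ {1,…,h}^{2r}` in which every value occurs
an even number of times. -/
def K (r h : ℕ) : ℕ :=
  (Finset.univ.filter (fun α : Fin (2 * r) → Fin h =>
    ∀ v : Fin h, Even ((Finset.univ.filter fun i => α i = v).card))).card

namespace Stmt10Aux

open Finset

variable {h : ℕ}

/-- number of occurrences of the value `v` in the tuple `f`. -/
def cnt {n : ℕ} (f : Fin n → Fin h) (v : Fin h) : ℕ :=
  (Finset.univ.filter fun i => f i = v).card

lemma cnt_eq_sum {n : ℕ} (f : Fin n → Fin h) (v : Fin h) :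
    cnt f v = ∑ i : Fin n, if f i = v then 1 else 0 :=
  Finset.card_filter _ _

lemma cnt_removeNth {n : ℕ} (f : Fin (n + 1) → Fin h) (p : Fin (n + 1)) (v : Fin h) :
    cnt f v = cnt (p.removeNth f) v + if f p = v then 1 else 0 := by
  rw [cnt_eq_sum, cnt_eq_sum,
    Fin.sum_univ_succAbove (fun i => if f i = v then 1 else 0) p]
  simp only [Fin.removeNth]
  exact add_comm _ _

lemma cnt_snoc_insertNth {n : ℕ} (β : Fin n → Fin h) (j : Fin (n + 1)) (v w : Fin h) :
    cnt (Fin.snoc (j.insertNth v β) v) w = cnt β w + (if v = w then 2 else 0) := by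
  rw [cnt_removeNth _ (Fin.last (n + 1)), Fin.removeNth_last, Fin.init_snoc, Fin.snoc_last,
    cnt_removeNth _ j, Fin.removeNth_insertNth, Fin.insertNth_apply_same]
  split <;> omega

lemma reconstruct {n : ℕ} (α : Fin (n + 2) → Fin h) {j : Fin (n + 1)}
    (hj : Fin.init α j = α (Fin.last (n + 1))) :
    Fin.snoc (j.insertNth (α (Fin.last (n + 1))) (j.removeNth (Fin.init α)))
      (α (Fin.last (n + 1))) = α := by
  have h1 : j.insertNth (α (Fin.last (n + 1))) (j.removeNth (Fin.init α)) = Fin.init α := by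
    rw [← hj]
    exact Fin.insertNth_self_removeNth j (Fin.init α)
  rw [h1, Fin.snoc_init_self]

/-- tuples in which every value occurs an even number of times. -/
def Kset (n h : ℕ) : Finset (Fin n → Fin h) :=
  Finset.univ.filter fun α => ∀ v, Even (cnt α v)

/-- tuples in which every value occurs zero or two times. -/
def Tset (n h : ℕ) : Finset (Fin n → Fin h) :=
  Finset.univ.filter fun α => ∀ v, cnt α v = 0 ∨ cnt α v = 2

lemma Tset_subset_Kset (n : ℕ) : Tset n h ⊆ Kset n h := by
  intro α hα
  rw [Tset, mem_filter] at hα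
  rw [Kset, mem_filter]
  refine ⟨mem_univ _, fun v => ?_⟩
  rcases hα.2 v with h0 | h2
  · rw [h0]; exact Even.zero
  · rw [h2]; exact ⟨1, rfl⟩

lemma exists_of_mem_Kset {n : ℕ} {α : Fin (n + 2) → Fin h} (hα : α ∈ Kset (n + 2) h) :
    ∃ j : Fin (n + 1), Fin.init α j = α (Fin.last (n + 1)) := by
  by_contra hcon
  push_neg at hcon
  rw [Kset, mem_filter] at hα
  have hv := hα.2 (α (Fin.last (n + 1)))
  have h0 : cnt (Fin.init α) (α (Fin.last (n + 1))) = 0 := by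
    rw [cnt, Finset.card_eq_zero, Finset.filter_eq_empty_iff]
    intro j _
    exact hcon j
  have h1 : cnt α (α (Fin.last (n + 1))) = 1 := by
    rw [cnt_removeNth α (Fin.last (n + 1)), Fin.removeNth_last, h0, if_pos rfl]
  rw [h1] at hv
  exact (Nat.not_even_one) hv

/-- the decomposition map for the upper bound. -/
def Phi {h : ℕ} (n : ℕ) (α : Fin (n + 2) → Fin h) :
    Fin (n + 1) × Fin h × (Fin n → Fin h) :=
  if hx : ∃ j : Fin (n + 1), Fin.init α j = α (Fin.last (n + 1))
  then (hx.choose, α (Fin.last (n + 1)), hx.choose.removeNth (Fin.init α))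
  else ((0 : Fin (n + 1)), α (Fin.last (n + 1)), fun _ => α (Fin.last (n + 1)))

lemma Kset_step (n : ℕ) :
    (Kset (n + 2) h).card ≤ (n + 1) * (h * (Kset n h).card) := by
  classical
  have hmaps : ∀ α ∈ Kset (n + 2) h, Phi n α ∈
      (univ : Finset (Fin (n + 1))) ×ˢ (univ : Finset (Fin h)) ×ˢ Kset n h := by
    intro α hα
    have hx := exists_of_mem_Kset hα
    rw [Phi, dif_pos hx]
    have hj := hx.choose_spec
    rw [mem_product, mem_product]
    refine ⟨mem_univ _, mem_univ _, ?_⟩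
    rw [Kset, mem_filter]
    refine ⟨mem_univ _, fun w => ?_⟩
    show Even (cnt (hx.choose.removeNth (Fin.init α)) w)
    rw [Kset, mem_filter] at hα
    have hA := hα.2 w
    have e1 : cnt α w = cnt (Fin.init α) w
        + (if α (Fin.last (n + 1)) = w then 1 else 0) := by
      rw [cnt_removeNth α (Fin.last (n + 1)), Fin.removeNth_last]
    have e2 : cnt (Fin.init α) w = cnt (hx.choose.removeNth (Fin.init α)) w
        + (if α (Fin.last (n + 1)) = w then 1 else 0) := by
      rw [cnt_removeNth (Fin.init α) hx.choose, hj]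
    rw [e1, e2] at hA
    set t := (if α (Fin.last (n + 1)) = w then 1 else 0) with ht
    have htle : t ≤ 1 := by rw [ht]; split <;> omega
    obtain ⟨k, hk⟩ := hA
    exact ⟨k - t, by omega⟩
  have hinj : Set.InjOn (Phi n) (↑(Kset (n + 2) h) : Set (Fin (n + 2) → Fin h)) := by
    intro α hα α' hα' heq
    have hx := exists_of_mem_Kset (Finset.mem_coe.mp hα)
    have hx' := exists_of_mem_Kset (Finset.mem_coe.mp hα')
    rw [Phi, Phi, dif_pos hx, dif_pos hx'] at heq
    have h1 : hx.choose = hx'.choose := congrArg Prod.fst heq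
    have h2 : α (Fin.last (n + 1)) = α' (Fin.last (n + 1)) :=
      congrArg (fun p => p.2.1) heq
    have h3 : hx.choose.removeNth (Fin.init α) = hx'.choose.removeNth (Fin.init α') :=
      congrArg (fun p => p.2.2) heq
    rw [← reconstruct α hx.choose_spec, ← reconstruct α' hx'.choose_spec, h3, h1, h2]
  calc (Kset (n + 2) h).card
      ≤ ((univ : Finset (Fin (n + 1))) ×ˢ (univ : Finset (Fin h)) ×ˢ Kset n h).card :=
        Finset.card_le_card_of_injOn _ hmaps hinj
    _ = (n + 1) * (h * (Kset n h).card) := by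
        simp [Finset.card_product, Finset.card_univ]

lemma cnt_total {n : ℕ} (β : Fin n → Fin h) : ∑ v, cnt β v = n := by
  simp only [cnt_eq_sum]
  rw [Finset.sum_comm]
  simp

lemma zero_count_card {r : ℕ} (hrh : r ≤ h) {β : Fin (2 * r) → Fin h}
    (hβ : β ∈ Tset (2 * r) h) :
    (univ.filter fun v => cnt β v = 0).card = h - r := by
  rw [Tset, mem_filter] at hβ
  have hsum := cnt_total β
  have hsplit := Finset.sum_filter_add_sum_filter_not
    (univ : Finset (Fin h)) (fun v => cnt β v = 0) (cnt β)
  have hz : ∑ v ∈ univ.filter (fun v => cnt β v = 0), cnt β v = 0 :=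
    Finset.sum_eq_zero (fun v hv => (mem_filter.mp hv).2)
  have hnz : ∑ v ∈ univ.filter (fun v => ¬ cnt β v = 0), cnt β v =
      2 * (univ.filter (fun v => ¬ cnt β v = 0)).card := by
    rw [Finset.sum_congr rfl (fun v hv => ?_), Finset.sum_const, smul_eq_mul, mul_comm]
    rcases hβ.2 v with h0 | h2
    · exact absurd h0 (mem_filter.mp hv).2
    · exact h2
  have hcards := Finset.card_filter_add_card_filter_not
    (s := (univ : Finset (Fin h))) (p := fun v => cnt β v = 0)
  simp only [Finset.card_univ, Fintype.card_fin] at hcards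
  omega

lemma Tset_step (r : ℕ) (hrh : r ≤ h) :
    (2 * r + 1) * ((h - r) * (Tset (2 * r) h).card) ≤ (Tset (2 * r + 2) h).card := by
  classical
  set E := ((univ : Finset (Fin h)) ×ˢ Tset (2 * r) h).filter
    (fun y => cnt y.2 y.1 = 0) with hE
  set D := (univ : Finset (Fin (2 * r + 1))) ×ˢ E with hD
  have hmaps : ∀ x ∈ D,
      (Fin.snoc (x.1.insertNth x.2.1 x.2.2) x.2.1 : Fin (2 * r + 2) → Fin h) ∈
        Tset (2 * r + 2) h := by
    intro x hx
    rw [hD, mem_product, hE, mem_filter, mem_product] at hx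
    obtain ⟨-, ⟨-, hβ⟩, hzero⟩ := hx
    rw [Tset, mem_filter] at hβ ⊢
    refine ⟨mem_univ _, fun w => ?_⟩
    rw [cnt_snoc_insertNth]
    by_cases hw : x.2.1 = w
    · rw [if_pos hw, ← hw, hzero]
      exact Or.inr rfl
    · rw [if_neg hw, add_zero]
      exact hβ.2 w
  have hinj : Set.InjOn (fun x : Fin (2 * r + 1) × Fin h × (Fin (2 * r) → Fin h) =>
      (Fin.snoc (x.1.insertNth x.2.1 x.2.2) x.2.1 : Fin (2 * r + 2) → Fin h)) D := by
    intro x hx y hy heq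
    rw [Finset.mem_coe, hD, mem_product, hE, mem_filter, mem_product] at hx hy
    obtain ⟨-, ⟨-, -⟩, hxz⟩ := hx
    obtain ⟨-, ⟨-, -⟩, hyz⟩ := hy
    simp only at heq
    have hv : x.2.1 = y.2.1 := by
      have := congrFun heq (Fin.last (2 * r + 1))
      simpa [Fin.snoc_last] using this
    have hγ : (x.1.insertNth x.2.1 x.2.2 : Fin (2 * r + 1) → Fin h) = y.1.insertNth y.2.1 y.2.2 := by
      have := congrArg Fin.init heq
      rwa [Fin.init_snoc, Fin.init_snoc] at this
    have hjj : x.1 = y.1 := by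
      by_contra hne
      obtain ⟨k, hk⟩ := Fin.exists_succAbove_eq (Ne.symm hne)
      have h1 : (x.1.insertNth x.2.1 x.2.2 : Fin (2 * r + 1) → Fin h) y.1 = x.2.2 k := by
        rw [← hk, Fin.insertNth_apply_succAbove]
      have h2 : (y.1.insertNth y.2.1 y.2.2 : Fin (2 * r + 1) → Fin h) y.1 = y.2.1 := Fin.insertNth_apply_same _ _ _
      have h3 : x.2.2 k = x.2.1 := by rw [← h1, hγ, h2, hv]
      have h4 : x.2.2 k ≠ x.2.1 := by
        intro hc
        have : k ∈ (univ.filter fun i => x.2.2 i = x.2.1) := by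
          rw [mem_filter]; exact ⟨mem_univ _, hc⟩
        have := Finset.card_pos.mpr ⟨k, this⟩
        rw [show (univ.filter fun i => x.2.2 i = x.2.1).card = cnt x.2.2 x.2.1 from rfl,
          hxz] at this
        omega
      exact h4 h3
    have hβ : x.2.2 = y.2.2 := by
      have := congrArg (fun g => Fin.removeNth x.1 g) hγ
      rwa [Fin.removeNth_insertNth, hjj, ← hv, Fin.removeNth_insertNth] at this
      
    exact Prod.ext hjj (Prod.ext hv hβ)
  have hDcard : D.card = (2 * r + 1) * E.card := by
    rw [hD, Finset.card_product, Finset.card_univ, Fintype.card_fin]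
  have hEcard : (h - r) * (Tset (2 * r) h).card ≤ E.card := by
    have : E.card = ∑ β ∈ Tset (2 * r) h,
        (univ.filter fun v => cnt β v = 0).card := by
      rw [hE, Finset.card_filter, Finset.sum_product]
      rw [Finset.sum_comm]
      exact Finset.sum_congr rfl (fun β _ => (Finset.card_filter _ _).symm)
    rw [this]
    calc (h - r) * (Tset (2 * r) h).card
        = ∑ _β ∈ Tset (2 * r) h, (h - r) := by
          rw [Finset.sum_const, smul_eq_mul, mul_comm]
      _ ≤ ∑ β ∈ Tset (2 * r) h, (univ.filter fun v => cnt β v = 0).card :=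
          Finset.sum_le_sum (fun β hβ => (zero_count_card hrh hβ).ge)
  calc (2 * r + 1) * ((h - r) * (Tset (2 * r) h).card)
      ≤ (2 * r + 1) * E.card := Nat.mul_le_mul_left _ hEcard
    _ = D.card := hDcard.symm
    _ ≤ (Tset (2 * r + 2) h).card := Finset.card_le_card_of_injOn _ hmaps hinj

lemma Tset_lower : ∀ r : ℕ, r ≤ h →
    (∏ i ∈ Finset.range r, (2 * i + 1)) * ∏ i ∈ Finset.range r, (h - i) ≤
      (Tset (2 * r) h).card := by
  intro r
  induction r with
  | zero =>
    intro _
    simp only [Finset.range_zero, Finset.prod_empty, one_mul]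
    refine Finset.card_pos.mpr ⟨fun i => i.elim0, ?_⟩
    rw [Tset, mem_filter]
    exact ⟨mem_univ _, fun v => Or.inl (by simp [cnt])⟩
  | succ r ih =>
    intro hrh
    have hr : r ≤ h := by omega
    have h2 : 2 * (r + 1) = 2 * r + 2 := by ring
    rw [h2, Finset.prod_range_succ, Finset.prod_range_succ]
    calc (∏ i ∈ Finset.range r, (2 * i + 1)) * (2 * r + 1) *
          ((∏ i ∈ Finset.range r, (h - i)) * (h - r))
        = (2 * r + 1) * ((h - r) * ((∏ i ∈ Finset.range r, (2 * i + 1)) *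
            ∏ i ∈ Finset.range r, (h - i))) := by ring
      _ ≤ (2 * r + 1) * ((h - r) * (Tset (2 * r) h).card) := by
          exact Nat.mul_le_mul_left _ (Nat.mul_le_mul_left _ (ih hr))
      _ ≤ (Tset (2 * r + 2) h).card := Tset_step r hr

lemma Kset_upper : ∀ r : ℕ,
    (Kset (2 * r) h).card ≤ (∏ i ∈ Finset.range r, (2 * i + 1)) * h ^ r := by
  intro r
  induction r with
  | zero =>
    simp only [Finset.range_zero, Finset.prod_empty, pow_zero, mul_one]
    calc (Kset (2 * 0) h).card ≤ (univ : Finset (Fin (2 * 0) → Fin h)).card :=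
          Finset.card_filter_le _ _
      _ = 1 := by simp
  | succ r ih =>
    have h2 : 2 * (r + 1) = 2 * r + 2 := by ring
    rw [h2, Finset.prod_range_succ, pow_succ]
    calc (Kset (2 * r + 2) h).card
        ≤ (2 * r + 1) * (h * (Kset (2 * r) h).card) := Kset_step (2 * r)
      _ ≤ (2 * r + 1) * (h * ((∏ i ∈ Finset.range r, (2 * i + 1)) * h ^ r)) := by
          exact Nat.mul_le_mul_left _ (Nat.mul_le_mul_left _ ih)
      _ = (∏ i ∈ Finset.range r, (2 * i + 1)) * (2 * r + 1) * (h ^ r * h) := by ring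

lemma fact_eq : ∀ r : ℕ,
    Nat.factorial (2 * r) = 2 ^ r * Nat.factorial r * ∏ i ∈ Finset.range r, (2 * i + 1) := by
  intro r
  induction r with
  | zero => simp
  | succ r ih =>
    have h2 : 2 * (r + 1) = 2 * r + 1 + 1 := by ring
    rw [h2, Nat.factorial_succ, Nat.factorial_succ, ih, Finset.prod_range_succ,
      Nat.factorial_succ, pow_succ]
    ring

lemma mu_eq (r : ℕ) : mu r = ((∏ i ∈ Finset.range r, (2 * i + 1) : ℕ) : ℝ) := by
  have hne : ((2 : ℝ) ^ r * (Nat.factorial r : ℝ)) ≠ 0 := by positivity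
  rw [mu, fact_eq]
  push_cast
  rw [mul_comm ((2 : ℝ) ^ r * (Nat.factorial r : ℝ)), mul_div_assoc, div_self hne, mul_one]

lemma mu_nonneg (r : ℕ) : 0 ≤ mu r := by
  rw [mu_eq]; positivity

end Stmt10Aux

theorem stmt10 (r h : ℕ) (hr : 1 ≤ r) (hrh : r ≤ h) :
    mu r * ∏ i ∈ Finset.range r, ((h : ℝ) - i) ≤ (K r h : ℝ) ∧
    (K r h : ℝ) ≤ mu r * (h : ℝ) ^ r ∧
    ∃ θ ∈ Set.Icc (0 : ℝ) 1, (K r h : ℝ) = mu r * ((h : ℝ) - θ * r) ^ r := by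
  classical
  open Stmt10Aux in
  have hKeq : K r h = (Kset (2 * r) h).card := rfl
  have hprodcast : ∏ i ∈ Finset.range r, ((h : ℝ) - i) =
      ((∏ i ∈ Finset.range r, (h - i) : ℕ) : ℝ) := by
    rw [Nat.cast_prod]
    refine Finset.prod_congr rfl (fun i hi => ?_)
    rw [Nat.cast_sub]
    exact le_trans (le_of_lt (Finset.mem_range.mp hi)) hrh
  have hlow : mu r * ∏ i ∈ Finset.range r, ((h : ℝ) - i) ≤ (K r h : ℝ) := by
    rw [Stmt10Aux.mu_eq, hprodcast, ← Nat.cast_mul, Nat.cast_le, hKeq]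
    exact le_trans (Stmt10Aux.Tset_lower r hrh)
      (Finset.card_le_card (Stmt10Aux.Tset_subset_Kset (2 * r)))
  have hhigh : (K r h : ℝ) ≤ mu r * (h : ℝ) ^ r := by
    rw [Stmt10Aux.mu_eq, hKeq]
    calc ((Kset (2 * r) h).card : ℝ)
        ≤ (((∏ i ∈ Finset.range r, (2 * i + 1)) * h ^ r : ℕ) : ℝ) :=
          Nat.cast_le.mpr (Stmt10Aux.Kset_upper r)
      _ = ((∏ i ∈ Finset.range r, (2 * i + 1) : ℕ) : ℝ) * (h : ℝ) ^ r := by push_cast; ring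
  refine ⟨hlow, hhigh, ?_⟩
  set f : ℝ → ℝ := fun θ => mu r * ((h : ℝ) - θ * r) ^ r with hf
  have hcont : ContinuousOn f (Set.Icc 0 1) := by
    apply Continuous.continuousOn
    fun_prop
  have hf0 : f 0 = mu r * (h : ℝ) ^ r := by simp [hf]
  have hf1 : f 1 = mu r * ((h : ℝ) - r) ^ r := by simp [hf]
  have hf1le : f 1 ≤ (K r h : ℝ) := by
    refine le_trans ?_ hlow
    rw [hf1]
    refine mul_le_mul_of_nonneg_left ?_ (Stmt10Aux.mu_nonneg r)
    have hhr : (0 : ℝ) ≤ (h : ℝ) - r := by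
      have : (r : ℝ) ≤ (h : ℝ) := Nat.cast_le.mpr hrh
      linarith
    calc ((h : ℝ) - r) ^ r = ∏ _i ∈ Finset.range r, ((h : ℝ) - r) := by
          rw [Finset.prod_const, Finset.card_range]
      _ ≤ ∏ i ∈ Finset.range r, ((h : ℝ) - i) := by
          refine Finset.prod_le_prod (fun i _ => hhr) (fun i hi => ?_)
          have : (i : ℝ) ≤ (r : ℝ) := Nat.cast_le.mpr (le_of_lt (Finset.mem_range.mp hi))
          linarith
  have hmem : (K r h : ℝ) ∈ Set.Icc (f 1) (f 0) := ⟨hf1le, by rw [hf0]; exact hhigh⟩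
  obtain ⟨θ, hθ, hfθ⟩ := intermediate_value_Icc' (by norm_num : (0:ℝ) ≤ 1) hcont hmem
  exact ⟨θ, hθ, hfθ.symm⟩
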